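/- Let A ⊆ ℕ be a central set (a member of some minimal idempotent ultrafilter on (βℕ, ⊕)). Then there exist functions α from finite subsets of ℕ^ℕ to ℕ and H from finite subsets of ℕ^ℕ to finite subsets of ℕ such that: (1) max H(F) < min H(G) whenever F ⊊ G; (2) for every chain G_1 ⊊ G_2 ⊊ ... ⊊ G_n of finite subsets of ℕ^ℕ and every choice f_i ∈ G_i, the sum ∑_{i=1}^n ( α(G_i) + ∑_{t ∈ H(G_i)} f_i(t) ) belongs to A. -/

import Mathlib

/-- The extension of addition on ℕ to ultrafilters:
`A ∈ uadd U V ↔ {n | {m | m + n ∈ A} ∈ V} ∈ U`. -/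
def uadd (U V : Ultrafilter ℕ) : Ultrafilter ℕ :=
  U.bind fun n => V.map fun m => m + n

/-- A (nonempty) left ideal of `(βℕ, ⊕)`. -/
def IsLeftIdeal (L : Set (Ultrafilter ℕ)) : Prop :=
  L.Nonempty ∧ ∀ U V : Ultrafilter ℕ, V ∈ L → uadd U V ∈ L

/-- A minimal left ideal of `(βℕ, ⊕)`. -/
def IsMinimalLeftIdeal (L : Set (Ultrafilter ℕ)) : Prop :=
  IsLeftIdeal L ∧ ∀ L' : Set (Ultrafilter ℕ), IsLeftIdeal L' → L' ⊆ L → L' = L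

/-- A minimal ultrafilter: a member of some minimal left ideal of `(βℕ, ⊕)`. -/
def IsMinimalUltrafilter (U : Ultrafilter ℕ) : Prop :=
  ∃ L : Set (Ultrafilter ℕ), IsMinimalLeftIdeal L ∧ U ∈ L

/-- A central set: a member of some minimal idempotent ultrafilter. -/
def IsCentral (A : Set ℕ) : Prop :=
  ∃ U : Ultrafilter ℕ, IsMinimalUltrafilter U ∧ uadd U U = U ∧ A ∈ U


lemma mem_uadd {A : Set ℕ} {U V : Ultrafilter ℕ} :
    A ∈ uadd U V ↔ {n | {m | m + n ∈ A} ∈ V} ∈ U := Iff.rfl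

lemma uadd_pure_pure (x y : ℕ) : uadd (pure x) (pure y) = pure (y + x) := by
  ext A; simp [mem_uadd, Ultrafilter.mem_pure]

lemma mem_uadd_pure_left {A : Set ℕ} {n : ℕ} {V : Ultrafilter ℕ} :
    A ∈ uadd (pure n) V ↔ {m | m + n ∈ A} ∈ V := by
  simp [mem_uadd, Ultrafilter.mem_pure]

lemma uadd_assoc (U V W : Ultrafilter ℕ) : uadd (uadd U V) W = uadd U (uadd V W) := by
  ext A
  simp only [mem_uadd]
  constructor <;> intro h <;> · convert h using 2; ext; simp [mem_uadd, add_assoc]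


section Key

variable (F : Finset (ℕ → ℕ))

local notation "ι" => {f : ℕ → ℕ // f ∈ F}
local notation "X" => (ι → Ultrafilter ℕ)

def xop (x y : X) : X := fun f => uadd (x f) (y f)

lemma xop_assoc (x y z : X) : xop F (xop F x y) z = xop F x (xop F y z) := by
  funext f; exact uadd_assoc _ _ _

/-- combinatorial closure -/
def ccl (E : Set X) : Set X :=
  {q | ∀ s : ι → Set ℕ, (∀ f, s f ∈ q f) → ∃ x ∈ E, ∀ f, s f ∈ x f}

lemma subset_ccl {E : Set X} : E ⊆ ccl F E := fun x hx s hs => ⟨x, hx, hs⟩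

lemma ccl_mono {E E' : Set X} (h : E ⊆ E') : ccl F E ⊆ ccl F E' := by
  intro q hq s hs
  obtain ⟨x, hx, h2⟩ := hq s hs
  exact ⟨x, h hx, h2⟩

lemma ccl_ccl {E : Set X} : ccl F (ccl F E) ⊆ ccl F E := by
  intro q hq s hs
  obtain ⟨r, hr, h2⟩ := hq s hs
  exact hr s h2

lemma ccl_op_right {E : Set X} {q : X} (r : X) (hq : q ∈ ccl F E) :
    xop F q r ∈ ccl F ((xop F · r) '' E) := by
  intro s hs
  have hs' : ∀ f, {n | {m | m + n ∈ s f} ∈ r f} ∈ q f := fun f => hs f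
  obtain ⟨x, hx, h2⟩ := hq _ hs'
  exact ⟨xop F x r, Set.mem_image_of_mem _ hx, fun f => h2 f⟩

lemma ccl_op_pure {E : Set X} {r : X} (n : ι → ℕ) (hr : r ∈ ccl F E) :
    xop F (fun f => pure (n f)) r ∈ ccl F (xop F (fun f => pure (n f)) '' E) := by
  intro s hs
  have hs' : ∀ f, {m | m + n f ∈ s f} ∈ r f := fun f => mem_uadd_pure_left.1 (hs f)
  obtain ⟨x, hx, h2⟩ := hr _ hs'
  exact ⟨_, Set.mem_image_of_mem _ hx, fun f => mem_uadd_pure_left.2 (h2 f)⟩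


def etup (a : ℕ) (H : Finset ℕ) : X := fun f => pure (a + ∑ t ∈ H, f.1 t)

lemma etup_op {a b : ℕ} {H K : Finset ℕ} (hdisj : Disjoint H K) :
    xop F (etup F a H) (etup F b K) = etup F (a + b) (H ∪ K) := by
  funext f
  show uadd (pure _) (pure _) = pure _
  rw [uadd_pure_pure, Finset.sum_union hdisj]
  congr 1
  ring

lemma ccl_op_etup {E : Set X} {r : X} (a : ℕ) (H : Finset ℕ) (hr : r ∈ ccl F E) :
    xop F (etup F a H) r ∈ ccl F (xop F (etup F a H) '' E) :=
  ccl_op_pure F (fun f => a + ∑ t ∈ H, f.1 t) hr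

def Em (m : ℕ) : Set X := {x | ∃ a H, (∀ t ∈ H, m < t) ∧ x = etup F a H}

def Ep (m : ℕ) : Set X := {x | ∃ a H, H.Nonempty ∧ (∀ t ∈ H, m < t) ∧ x = etup F a H}

def Dset : Set X := ⋂ m, ccl F (Em F m)

def Iset : Set X := ⋂ m, ccl F (Ep F m)

lemma Iset_subset_Dset : Iset F ⊆ Dset F := by
  intro q hq
  simp only [Iset, Dset, Set.mem_iInter] at *
  intro m
  refine ccl_mono F ?_ (hq m)
  rintro _ ⟨a, H, _, hH, rfl⟩
  exact ⟨a, H, hH, rfl⟩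

lemma ccl_op_ccl {E T : Set X} {q q' : X} (hq : q ∈ ccl F E)
    (h : ∀ x ∈ E, xop F x q' ∈ ccl F T) : xop F q q' ∈ ccl F T := by
  refine ccl_ccl F (ccl_mono F ?_ (ccl_op_right F q' hq))
  rintro _ ⟨x, hx, rfl⟩
  exact h x hx

lemma sup_disjoint {H K : Finset ℕ} (h : ∀ t ∈ K, H.sup id < t) : Disjoint H K := by
  rw [Finset.disjoint_left]
  intro t ht htK
  exact absurd (Finset.le_sup (f := id) ht) (not_le.2 (h t htK))

lemma Dset_mul {q q' : X} (hq : q ∈ Dset F) (hq' : q' ∈ Dset F) : xop F q q' ∈ Dset F := by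
  simp only [Dset, Set.mem_iInter] at *
  intro m
  refine ccl_op_ccl F (hq m) ?_
  rintro _ ⟨a, H, hH, rfl⟩
  refine ccl_mono F ?_ (ccl_op_etup F a H (hq' (max m (H.sup id))))
  rintro _ ⟨_, ⟨b, K, hK, rfl⟩, rfl⟩
  have hd : Disjoint H K := sup_disjoint fun t ht => lt_of_le_of_lt (le_max_right _ _) (hK t ht)
  refine ⟨a + b, H ∪ K, ?_, etup_op F hd⟩
  intro t ht
  rcases Finset.mem_union.1 ht with h | h
  · exact hH t h
  · exact lt_of_le_of_lt (le_max_left _ _) (hK t h)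

lemma Iset_mul_right {r q : X} (hr : r ∈ Iset F) (hq : q ∈ Dset F) : xop F r q ∈ Iset F := by
  simp only [Iset, Dset, Set.mem_iInter] at *
  intro m
  refine ccl_op_ccl F (hr m) ?_
  rintro _ ⟨a, H, hHne, hH, rfl⟩
  refine ccl_mono F ?_ (ccl_op_etup F a H (hq (max m (H.sup id))))
  rintro _ ⟨_, ⟨b, K, hK, rfl⟩, rfl⟩
  have hd : Disjoint H K := sup_disjoint fun t ht => lt_of_le_of_lt (le_max_right _ _) (hK t ht)
  refine ⟨a + b, H ∪ K, ⟨hHne.choose, Finset.mem_union_left _ hHne.choose_spec⟩, ?_,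
    etup_op F hd⟩
  intro t ht
  rcases Finset.mem_union.1 ht with h | h
  · exact hH t h
  · exact lt_of_le_of_lt (le_max_left _ _) (hK t h)

lemma Dset_mul_left {q r : X} (hq : q ∈ Dset F) (hr : r ∈ Iset F) : xop F q r ∈ Iset F := by
  simp only [Iset, Dset, Set.mem_iInter] at *
  intro m
  refine ccl_op_ccl F (hq m) ?_
  rintro _ ⟨a, H, hH, rfl⟩
  refine ccl_mono F ?_ (ccl_op_etup F a H (hr (max m (H.sup id))))
  rintro _ ⟨_, ⟨b, K, hKne, hK, rfl⟩, rfl⟩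
  have hd : Disjoint H K := sup_disjoint fun t ht => lt_of_le_of_lt (le_max_right _ _) (hK t ht)
  refine ⟨a + b, H ∪ K, ⟨hKne.choose, Finset.mem_union_right _ hKne.choose_spec⟩, ?_,
    etup_op F hd⟩
  intro t ht
  rcases Finset.mem_union.1 ht with h | h
  · exact hH t h
  · exact lt_of_le_of_lt (le_max_left _ _) (hK t h)

lemma diag_mem_Dset (p : Ultrafilter ℕ) : (fun _ => p : X) ∈ Dset F := by
  simp only [Dset, Set.mem_iInter]
  intro m s hs
  have hT : (⋂ f : ι, s f) ∈ p := (Filter.iInter_mem).2 hs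
  obtain ⟨a, ha⟩ := Ultrafilter.nonempty_of_mem hT
  refine ⟨etup F a ∅, ⟨a, ∅, by simp, rfl⟩, fun f => ?_⟩
  show s f ∈ (pure (a + ∑ t ∈ (∅ : Finset ℕ), f.1 t) : Ultrafilter ℕ)
  simpa using Set.mem_iInter.1 ha f

lemma Iset_nonempty : (Iset F).Nonempty := by
  refine ⟨fun f => (Filter.hyperfilter ℕ).map
    (fun j => 0 + ∑ t ∈ ({j} : Finset ℕ), f.1 t), ?_⟩
  simp only [Iset, Set.mem_iInter]
  intro m s hs
  have hT : (⋂ f : ι, (fun j => 0 + ∑ t ∈ ({j} : Finset ℕ), f.1 t) ⁻¹' s f)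
      ∈ Filter.hyperfilter ℕ := (Filter.iInter_mem).2 fun f => Ultrafilter.mem_map.1 (hs f)
  have hinf : (⋂ f : ι, (fun j => 0 + ∑ t ∈ ({j} : Finset ℕ), f.1 t) ⁻¹' s f).Infinite := by
    intro hfin
    exact Filter.notMem_hyperfilter_of_finite hfin hT
  obtain ⟨j, hjmem, hjgt⟩ := hinf.exists_gt m
  refine ⟨etup F 0 {j}, ⟨0, {j}, ⟨j, Finset.mem_singleton_self j⟩, ?_, rfl⟩, fun f => ?_⟩
  · intro t ht
    rw [Finset.mem_singleton] at ht
    omega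
  · exact Set.mem_iInter.1 hjmem f

lemma isClosed_ccl (E : Set X) : IsClosed (ccl F E) := by
  rw [← isOpen_compl_iff]
  rw [isOpen_iff_forall_mem_open]
  intro q hq
  simp only [Set.mem_compl_iff, ccl, Set.mem_setOf_eq, not_forall] at hq
  obtain ⟨s, hs, hno⟩ := hq
  refine ⟨⋂ f : ι, (fun r : X => r f) ⁻¹' {u | s f ∈ u}, ?_, ?_, ?_⟩
  · intro r hr hrc
    obtain ⟨x, hx, h2⟩ := hrc s (fun f => Set.mem_iInter.1 hr f)
    exact hno ⟨x, hx, h2⟩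
  · exact isOpen_iInter_of_finite fun f => (ultrafilter_isOpen_basic _).preimage (continuous_apply f)
  · exact Set.mem_iInter.2 hs

lemma continuous_uadd_right (V : Ultrafilter ℕ) : Continuous (uadd · V) := by
  rw [ultrafilterBasis_is_basis.continuous_iff]
  rintro _ ⟨s, rfl⟩
  exact ultrafilter_isOpen_basic {n | {m | m + n ∈ s} ∈ V}

lemma continuous_xop_right (r : X) : Continuous (xop F · r) :=
  continuous_pi fun f => (continuous_uadd_right (r f)).comp (continuous_apply f)

lemma isClosed_Dset : IsClosed (Dset F) := isClosed_iInter fun _ => isClosed_ccl F _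

lemma isClosed_Iset : IsClosed (Iset F) := isClosed_iInter fun _ => isClosed_ccl F _


set_option maxHeartbeats 1000000 in
theorem key_lemma (p : Ultrafilter ℕ) (hmin : IsMinimalUltrafilter p) (hid : uadd p p = p)
    {B : Set ℕ} (hB : B ∈ p) (m : ℕ) :
    ∃ a H, H.Nonempty ∧ (∀ t ∈ H, m < t) ∧ ∀ f ∈ F, a + ∑ t ∈ H, f t ∈ B := by
  classical
  obtain ⟨L, ⟨⟨hLne, hLideal⟩, hLmin⟩, hpL⟩ := hmin
  set u : X := (fun _ => p) with hu_def
  have hu : u ∈ Dset F := diag_mem_Dset F p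
  have huu : xop F u u = u := funext fun f => hid
  obtain ⟨i₀, hi₀⟩ := Iset_nonempty F
  set S₀ : Set X := Iset F ∩ (xop F · u) '' Dset F with hS₀def
  have hS₀ne : S₀.Nonempty :=
    ⟨xop F i₀ u, Iset_mul_right F hi₀ hu, ⟨i₀, Iset_subset_Dset F hi₀, rfl⟩⟩
  have hS₀closed : IsClosed S₀ :=
    (isClosed_Iset F).inter
      (((isClosed_Dset F).isCompact.image (continuous_xop_right F u)).isClosed)
  have hS₀mul : ∀ x ∈ S₀, ∀ y ∈ S₀, xop F x y ∈ S₀ := by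
    intro x hx y hy
    obtain ⟨hxI, -⟩ := hx
    obtain ⟨hyI, d, hd, hdy⟩ := hy
    have hyD : y ∈ Dset F := by
      rw [← show xop F d u = y from hdy]; exact Dset_mul F hd hu
    refine ⟨Iset_mul_right F hxI hyD, ⟨xop F x d, Dset_mul F (Iset_subset_Dset F hxI) hd, ?_⟩⟩
    show xop F (xop F x d) u = xop F x y
    rw [xop_assoc, show xop F d u = y from hdy]
  letI : Mul ({f : ℕ → ℕ // f ∈ F} → Ultrafilter ℕ) := ⟨xop F⟩
  letI : Semigroup ({f : ℕ → ℕ // f ∈ F} → Ultrafilter ℕ) := { mul_assoc := xop_assoc F }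
  obtain ⟨v, hvS₀, hv⟩ := exists_idempotent_in_compact_subsemigroup
    (fun r => continuous_xop_right F r) S₀ hS₀ne hS₀closed.isCompact hS₀mul
  obtain ⟨hvI, d, hdD, hdv⟩ := hvS₀
  replace hdv : xop F d u = v := hdv
  have hvv : xop F v v = v := hv
  have hvu : xop F v u = v := by
    rw [← hdv, xop_assoc, huu]
  set w : X := xop F u v with hw_def
  have hww : xop F w w = w := by
    rw [hw_def, xop_assoc, ← xop_assoc F v u v, hvu, hvv]
  have hvL : ∀ f, v f ∈ L := by
    intro f
    rw [← hdv]
    exact hLideal _ _ hpL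
  have hwL : ∀ f, w f ∈ L := fun f => hLideal _ _ (hvL f)
  have hpw : ∀ f : {f : ℕ → ℕ // f ∈ F}, uadd p (w f) = p := by
    intro f
    have hLI' : IsLeftIdeal {z | ∃ y, z = uadd y (w f)} :=
      ⟨⟨uadd p (w f), p, rfl⟩, by rintro U _ ⟨y, rfl⟩; exact ⟨uadd U y, (uadd_assoc _ _ _).symm⟩⟩
    have hsub : {z | ∃ y, z = uadd y (w f)} ⊆ L := by
      rintro _ ⟨y, rfl⟩
      exact hLideal _ _ (hwL f)
    obtain ⟨y, hy⟩ : p ∈ {z | ∃ y, z = uadd y (w f)} := (hLmin _ hLI' hsub) ▸ hpL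
    have hwf : uadd (w f) (w f) = w f := congrFun hww f
    rw [hy, uadd_assoc, hwf]
  have huw : xop F u w = u := funext hpw
  have huvw : xop F u w = w := by
    rw [hw_def, ← xop_assoc, huu]
  have huI : u ∈ Iset F := by
    have huw' : u = w := by rw [← huw, huvw]
    rw [huw']
    exact Dset_mul_left F hu hvI
  have h1 : u ∈ ccl F (Ep F m) := Set.mem_iInter.1 huI m
  obtain ⟨x, ⟨a, H, hne, hgt, hxe⟩, hx⟩ := h1 (fun _ => B) (fun f => hB)
  refine ⟨a, H, hne, hgt, fun f hf => Ultrafilter.mem_pure.1 ?_⟩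
  have := hx ⟨f, hf⟩
  rw [hxe] at this
  exact this

end Key

section Star

variable (p : Ultrafilter ℕ)

def starSet (A : Set ℕ) : Set ℕ := {x | x ∈ A ∧ {m | m + x ∈ A} ∈ p}

lemma starSet_subset (A : Set ℕ) : starSet p A ⊆ A := fun _ hx => hx.1

lemma starSet_mem {A : Set ℕ} (hid : uadd p p = p) (hA : A ∈ p) : starSet p A ∈ p := by
  have h2 : {x | {m | m + x ∈ A} ∈ p} ∈ p := mem_uadd.1 (by rw [hid]; exact hA)
  have := Filter.inter_mem (Ultrafilter.mem_coe.2 hA) (Ultrafilter.mem_coe.2 h2)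
  exact this

lemma starSet_shift {A : Set ℕ} (hid : uadd p p = p) {x : ℕ} (hx : x ∈ starSet p A) :
    {m | m + x ∈ starSet p A} ∈ p := by
  have h1 : {m | m + x ∈ A} ∈ p := hx.2
  have h2 : {m | {y | y + (m + x) ∈ A} ∈ p} ∈ p := by
    have h3 : {m | m + x ∈ A} ∈ uadd p p := by rw [hid]; exact h1
    have h4 := mem_uadd.1 h3
    have : {n | {y | y + n + x ∈ A} ∈ p} = {m | {y | y + (m + x) ∈ A} ∈ p} := by
      ext n
      simp [add_assoc]
    rwa [← this]
  have := Filter.inter_mem (Ultrafilter.mem_coe.2 h1) (Ultrafilter.mem_coe.2 h2)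
  refine Filter.mem_of_superset this ?_
  rintro m ⟨hm1, hm2⟩
  exact ⟨hm1, hm2⟩

end Star

section Build

attribute [local instance] Classical.propDecidable

variable (p : Ultrafilter ℕ) (As : Set ℕ)

noncomputable def Dprev (s : Finset (ℕ → ℕ)) (prev : ∀ t ⊂ s, (ℕ × Finset ℕ) × Finset ℕ) : Finset ℕ :=
  s.ssubsets.attach.biUnion fun t => (prev t.1 (Finset.mem_ssubsets.1 t.2)).2

noncomputable def Hprev (s : Finset (ℕ → ℕ)) (prev : ∀ t ⊂ s, (ℕ × Finset ℕ) × Finset ℕ) : Finset ℕ :=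
  s.ssubsets.attach.biUnion fun t => (prev t.1 (Finset.mem_ssubsets.1 t.2)).1.2

def Bset (s : Finset (ℕ → ℕ)) (prev : ∀ t ⊂ s, (ℕ × Finset ℕ) × Finset ℕ) : Set ℕ :=
  As ∩ ⋂ d ∈ ((Dprev s prev).filter fun d => {x | x + d ∈ As} ∈ p), {x | x + d ∈ As}

lemma Bset_mem (hAs : As ∈ p) (s : Finset (ℕ → ℕ))
    (prev : ∀ t ⊂ s, (ℕ × Finset ℕ) × Finset ℕ) : Bset p As s prev ∈ p := by
  refine Filter.inter_mem (Ultrafilter.mem_coe.2 hAs) ?_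
  rw [Filter.biInter_finset_mem]
  intro d hd
  exact (Finset.mem_filter.1 hd).2

variable (hmin : IsMinimalUltrafilter p) (hid : uadd p p = p) (hAs : As ∈ p)

noncomputable def stepA (s : Finset (ℕ → ℕ))
    (prev : ∀ t ⊂ s, (ℕ × Finset ℕ) × Finset ℕ) : (ℕ × Finset ℕ) × Finset ℕ :=
  let ex := key_lemma s p hmin hid (Bset_mem p As hAs s prev) ((Hprev s prev).sup id)
  ((ex.choose, ex.choose_spec.choose),
    (s ×ˢ insert 0 (Dprev s prev)).image fun q =>
      ex.choose + ∑ t ∈ ex.choose_spec.choose, q.1 t + q.2)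

lemma stepA_spec (s : Finset (ℕ → ℕ)) (prev : ∀ t ⊂ s, (ℕ × Finset ℕ) × Finset ℕ) :
    ((stepA p As hmin hid hAs s prev).1.2).Nonempty ∧
    (∀ t ∈ (stepA p As hmin hid hAs s prev).1.2, (Hprev s prev).sup id < t) ∧
    (∀ f ∈ s, (stepA p As hmin hid hAs s prev).1.1 +
      ∑ t ∈ (stepA p As hmin hid hAs s prev).1.2, f t ∈ Bset p As s prev) ∧
    (stepA p As hmin hid hAs s prev).2 = (s ×ˢ insert 0 (Dprev s prev)).image fun q =>
      (stepA p As hmin hid hAs s prev).1.1 +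
        ∑ t ∈ (stepA p As hmin hid hAs s prev).1.2, q.1 t + q.2 := by
  have h := (key_lemma s p hmin hid (Bset_mem p As hAs s prev)
    ((Hprev s prev).sup id)).choose_spec.choose_spec
  exact ⟨h.1, h.2.1, h.2.2, rfl⟩

noncomputable def bval : Finset (ℕ → ℕ) → (ℕ × Finset ℕ) × Finset ℕ :=
  Finset.strongInduction (stepA p As hmin hid hAs)

lemma bval_eq (s : Finset (ℕ → ℕ)) :
    bval p As hmin hid hAs s = stepA p As hmin hid hAs s (fun t _ => bval p As hmin hid hAs t) :=
  Finset.strongInduction_eq _ s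

end Build

section Invariants

attribute [local instance] Classical.propDecidable

variable (p : Ultrafilter ℕ) (As : Set ℕ)
variable (hmin : IsMinimalUltrafilter p) (hid : uadd p p = p) (hAs : As ∈ p)

lemma HF_nonempty (s : Finset (ℕ → ℕ)) : ((bval p As hmin hid hAs s).1.2).Nonempty := by
  rw [bval_eq]
  exact (stepA_spec p As hmin hid hAs s _).1

lemma HF_lt {t s : Finset (ℕ → ℕ)} (hts : t ⊂ s) :
    ∀ a ∈ (bval p As hmin hid hAs t).1.2, ∀ b ∈ (bval p As hmin hid hAs s).1.2, a < b := by
  intro a ha b hb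
  rw [bval_eq] at hb
  have h2 := (stepA_spec p As hmin hid hAs s (fun t _ => bval p As hmin hid hAs t)).2.1 b hb
  have haH : a ∈ Hprev s (fun t _ => bval p As hmin hid hAs t) := by
    refine Finset.mem_biUnion.2 ⟨⟨t, Finset.mem_ssubsets.2 hts⟩, Finset.mem_attach _ _, ?_⟩
    exact ha
  exact lt_of_le_of_lt (Finset.le_sup (f := id) haH) h2

lemma SE_subset (hstar : ∀ x ∈ As, {m | m + x ∈ As} ∈ p) :
    ∀ s : Finset (ℕ → ℕ), ∀ x ∈ (bval p As hmin hid hAs s).2, x ∈ As := by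
  intro s
  induction s using Finset.strongInductionOn with
  | _ s ih =>
    intro x hx
    rw [bval_eq, (stepA_spec p As hmin hid hAs s _).2.2.2] at hx
    obtain ⟨q, hq, rfl⟩ := Finset.mem_image.1 hx
    obtain ⟨hq1, hq2⟩ := Finset.mem_product.1 hq
    have hterm := (stepA_spec p As hmin hid hAs s (fun t _ => bval p As hmin hid hAs t)).2.2.1
      q.1 hq1
    rcases Finset.mem_insert.1 hq2 with h0 | hd
    · rw [h0, add_zero]
      exact hterm.1
    · obtain ⟨t, -, hq2t⟩ := Finset.mem_biUnion.1 hd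
      have hq2As : q.2 ∈ As := ih t.1 (Finset.mem_ssubsets.1 t.2) q.2 hq2t
      have hfilt : q.2 ∈ (Dprev s (fun t _ => bval p As hmin hid hAs t)).filter
          (fun d => {x | x + d ∈ As} ∈ p) := Finset.mem_filter.2 ⟨hd, hstar _ hq2As⟩
      exact Set.mem_iInter₂.1 hterm.2 q.2 hfilt

lemma chain_sum (hstar : ∀ x ∈ As, {m | m + x ∈ As} ∈ p) :
    ∀ n : ℕ, ∀ G : Fin (n + 1) → Finset (ℕ → ℕ), StrictMono G →
    ∀ f : Fin (n + 1) → ℕ → ℕ, (∀ i, f i ∈ G i) →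
    (∑ i, ((bval p As hmin hid hAs (G i)).1.1 +
      ∑ t ∈ (bval p As hmin hid hAs (G i)).1.2, f i t)) ∈
      ((bval p As hmin hid hAs (G (Fin.last n))).2 : Finset ℕ) := by
  intro n
  induction n with
  | zero =>
    intro G _ f hf
    rw [Fin.sum_univ_one]
    rw [show G (Fin.last 0) = G 0 from rfl]
    rw [bval_eq, (stepA_spec p As hmin hid hAs (G 0) _).2.2.2]
    refine Finset.mem_image.2 ⟨(f 0, 0), ?_, ?_⟩
    · exact Finset.mem_product.2 ⟨hf 0, Finset.mem_insert_self 0 _⟩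
    · show _ + _ + 0 = _
      rw [add_zero]
  | succ n ih =>
    intro G hG f hf
    rw [Fin.sum_univ_castSucc]
    have hpre := ih (fun i => G i.castSucc) (hG.comp Fin.strictMono_castSucc)
      (fun i => f i.castSucc) (fun i => hf i.castSucc)
    have hts : G ((Fin.last n).castSucc) ⊂ G (Fin.last (n + 1)) :=
      hG (Fin.castSucc_lt_last (Fin.last n))
    rw [bval_eq p As hmin hid hAs (G (Fin.last (n + 1))),
      (stepA_spec p As hmin hid hAs (G (Fin.last (n + 1))) _).2.2.2]
    refine Finset.mem_image.2 ⟨(f (Fin.last (n + 1)),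
      ∑ i : Fin (n + 1), ((bval p As hmin hid hAs (G i.castSucc)).1.1 +
        ∑ t ∈ (bval p As hmin hid hAs (G i.castSucc)).1.2, f i.castSucc t)), ?_, ?_⟩
    · refine Finset.mem_product.2 ⟨hf _, Finset.mem_insert_of_mem ?_⟩
      refine Finset.mem_biUnion.2 ⟨⟨G ((Fin.last n).castSucc), Finset.mem_ssubsets.2 hts⟩,
        Finset.mem_attach _ _, ?_⟩
      exact hpre
    · show _ + _ + _ = _
      rw [add_comm]

end Invariants

/-- The Central Sets Theorem (De–Hindman–Strauss, 2008 version, for `(ℕ, +)`). -/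
theorem central_sets_theorem (A : Set ℕ) (hA : IsCentral A) :
    ∃ (α : Finset (ℕ → ℕ) → ℕ) (H : Finset (ℕ → ℕ) → Finset ℕ),
      (∀ F, (H F).Nonempty) ∧
      (∀ F G : Finset (ℕ → ℕ), F ⊂ G → ∀ s ∈ H F, ∀ t ∈ H G, s < t) ∧
      (∀ n : ℕ, 1 ≤ n → ∀ G : Fin n → Finset (ℕ → ℕ), StrictMono G →
        ∀ f : Fin n → ℕ → ℕ, (∀ i, f i ∈ G i) →
          (∑ i, (α (G i) + ∑ t ∈ H (G i), f i t)) ∈ A) := by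
  classical
  obtain ⟨p, hmin, hid, hAp⟩ := hA
  have hAs : starSet p A ∈ p := starSet_mem p hid hAp
  have hstar : ∀ x ∈ starSet p A, {m | m + x ∈ starSet p A} ∈ p :=
    fun x hx => starSet_shift p hid hx
  refine ⟨fun s => (bval p (starSet p A) hmin hid hAs s).1.1,
    fun s => (bval p (starSet p A) hmin hid hAs s).1.2, ?_, ?_, ?_⟩
  · exact fun s => HF_nonempty p _ hmin hid hAs s
  · exact fun F G hFG s hs t ht => HF_lt p _ hmin hid hAs hFG s hs t ht
  · intro n hn G hG f hf
    obtain ⟨k, rfl⟩ : ∃ k, n = k + 1 := ⟨n - 1, by omega⟩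
    exact starSet_subset p A
      (SE_subset p _ hmin hid hAs hstar _ _ (chain_sum p _ hmin hid hAs hstar k G hG f hf))
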